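/- Let q ∈ ℝ with 0 < q < 1, let x ∈ ℝ with x > 0, and let f₁, f₂ : ℝ → ℝ be functions bounded on the set {q^{k+1}/(1−q) : k ∈ ℕ}. Define M_q f(x) = Σ_{k=0}^∞ q^k · (q^k/(1−q))^{x−1} · f(q^{k+1}/(1−q)) (an absolutely convergent series). Then M_q(f₁)(x) · M_q(f₂)(x) = (1/(1−q))^{x−1} · Σ_{m=0}^∞ q^m · (q^m/(1−q))^{x−1} · (Σ_{k=0}^m f₁(q^{k+1}/(1−q)) · f₂(q^{m+1−k}/(1−q))), the series on the right converging absolutely. -/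
import Mathlib

open Finset

private lemma key_coeff (q : ℝ) (hq0 : 0 < q) (hq1 : q < 1) (x : ℝ) (k : ℕ) :
    q ^ k * (q ^ k / (1 - q)) ^ (x - 1)
      = (1 / (1 - q)) ^ (x - 1) * (q ^ x) ^ k := by
  have h1q : (0:ℝ) < 1 - q := by linarith
  have hqk : (0:ℝ) < q ^ k := pow_pos hq0 k
  have h1 : q ^ k / (1 - q) = q ^ k * (1 / (1 - q)) := by ring
  rw [h1, Real.mul_rpow hqk.le (by positivity)]
  have h2 : (q ^ k : ℝ) ^ (x - 1) = q ^ ((k : ℝ) * (x - 1)) := by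
    rw [← Real.rpow_natCast q k, ← Real.rpow_mul hq0.le]
  have h3 : ((q ^ x) ^ k : ℝ) = q ^ (x * (k : ℝ)) := by
    rw [← Real.rpow_natCast (q ^ x) k, ← Real.rpow_mul hq0.le]
  rw [h2, h3, ← Real.rpow_natCast q k]
  have h4 : q ^ ((k:ℝ)) * q ^ ((k : ℝ) * (x - 1)) = q ^ (x * (k : ℝ)) := by
    rw [← Real.rpow_add hq0]; ring_nf
  rw [← mul_assoc, h4, mul_comm]

/-- For `0 < q < 1`, bounded `f₁, f₂` on `{q^(k+1)/(1−q) : k ∈ ℕ}` and `x > 0`, the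
q-integral transform `M_q f(x) = Σ_k q^k (q^k/(1−q))^(x−1) f(q^(k+1)/(1−q))` (an absolutely
convergent series) satisfies the convolution formula
`M_q(f₁)(x) M_q(f₂)(x) = (1/(1−q))^(x−1) Σ_m q^m (q^m/(1−q))^(x−1) (f₁ ∘ f₂)(q·q^m/(1−q))`,
where `(f₁ ∘ f₂)(q·q^m/(1−q)) = Σ_{k=0}^m f₁(q^(k+1)/(1−q)) f₂(q^(m+1−k)/(1−q))`,
the right-hand series converging absolutely. -/
theorem qIntegralTransform_convolution (q : ℝ) (hq0 : 0 < q) (hq1 : q < 1)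
    (x : ℝ) (hx : 0 < x) (f₁ f₂ : ℝ → ℝ)
    (hb₁ : ∃ C : ℝ, ∀ k : ℕ, |f₁ (q ^ (k + 1) / (1 - q))| ≤ C)
    (hb₂ : ∃ C : ℝ, ∀ k : ℕ, |f₂ (q ^ (k + 1) / (1 - q))| ≤ C) :
    Summable (fun k : ℕ =>
      q ^ k * (q ^ k / (1 - q)) ^ (x - 1) * |f₁ (q ^ (k + 1) / (1 - q))|) ∧
    Summable (fun k : ℕ =>
      q ^ k * (q ^ k / (1 - q)) ^ (x - 1) * |f₂ (q ^ (k + 1) / (1 - q))|) ∧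
    Summable (fun m : ℕ => q ^ m * (q ^ m / (1 - q)) ^ (x - 1) *
      |∑ k ∈ Finset.range (m + 1),
        f₁ (q ^ (k + 1) / (1 - q)) * f₂ (q ^ (m + 1 - k) / (1 - q))|) ∧
    (∑' k : ℕ, q ^ k * (q ^ k / (1 - q)) ^ (x - 1) * f₁ (q ^ (k + 1) / (1 - q))) *
      (∑' k : ℕ, q ^ k * (q ^ k / (1 - q)) ^ (x - 1) * f₂ (q ^ (k + 1) / (1 - q)))
      = (1 / (1 - q)) ^ (x - 1) *
        ∑' m : ℕ, q ^ m * (q ^ m / (1 - q)) ^ (x - 1) *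
          ∑ k ∈ Finset.range (m + 1),
            f₁ (q ^ (k + 1) / (1 - q)) * f₂ (q ^ (m + 1 - k) / (1 - q)) := by
  obtain ⟨C₁, hC₁⟩ := hb₁
  obtain ⟨C₂, hC₂⟩ := hb₂
  have hC₁0 : 0 ≤ C₁ := le_trans (abs_nonneg _) (hC₁ 0)
  have hC₂0 : 0 ≤ C₂ := le_trans (abs_nonneg _) (hC₂ 0)
  have h1q : (0:ℝ) < 1 - q := by linarith
  set c : ℝ := (1 / (1 - q)) ^ (x - 1) with hc
  set r : ℝ := q ^ x with hr
  have hc0 : 0 < c := Real.rpow_pos_of_pos (by positivity) _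
  have hr0 : 0 < r := Real.rpow_pos_of_pos hq0 _
  have hr1 : r < 1 := Real.rpow_lt_one hq0.le hq1 hx
  have hkey : ∀ k : ℕ, q ^ k * (q ^ k / (1 - q)) ^ (x - 1) = c * r ^ k :=
    fun k => key_coeff q hq0 hq1 x k
  -- summability of |f|-weighted series
  have hsum : ∀ (g : ℝ → ℝ) (C : ℝ), (∀ k : ℕ, |g (q ^ (k + 1) / (1 - q))| ≤ C) →
      Summable (fun k : ℕ =>
        q ^ k * (q ^ k / (1 - q)) ^ (x - 1) * |g (q ^ (k + 1) / (1 - q))|) := by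
    intro g C hC
    have hle : ∀ k : ℕ, q ^ k * (q ^ k / (1 - q)) ^ (x - 1) * |g (q ^ (k + 1) / (1 - q))|
        ≤ c * C * r ^ k := by
      intro k
      rw [hkey k]
      calc c * r ^ k * |g (q ^ (k + 1) / (1 - q))| ≤ c * r ^ k * C :=
            mul_le_mul_of_nonneg_left (hC k) (by positivity)
        _ = c * C * r ^ k := by ring
    have hgsum : Summable (fun k : ℕ => c * C * r ^ k) :=
      (summable_geometric_of_lt_one hr0.le hr1).mul_left _
    exact Summable.of_nonneg_of_le (fun k => by positivity) hle hgsum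
  have hs₁ := hsum f₁ C₁ hC₁
  have hs₂ := hsum f₂ C₂ hC₂
  refine ⟨hs₁, hs₂, ?_, ?_⟩
  · -- third summability
    have hle : ∀ m : ℕ, q ^ m * (q ^ m / (1 - q)) ^ (x - 1) *
        |∑ k ∈ Finset.range (m + 1),
          f₁ (q ^ (k + 1) / (1 - q)) * f₂ (q ^ (m + 1 - k) / (1 - q))|
        ≤ c * C₁ * C₂ * ((m + 1 : ℝ) * r ^ m) := by
      intro m
      rw [hkey m]
      have hb : |∑ k ∈ Finset.range (m + 1),
          f₁ (q ^ (k + 1) / (1 - q)) * f₂ (q ^ (m + 1 - k) / (1 - q))|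
          ≤ (m + 1 : ℝ) * (C₁ * C₂) := by
        calc _ ≤ ∑ k ∈ Finset.range (m + 1),
              |f₁ (q ^ (k + 1) / (1 - q)) * f₂ (q ^ (m + 1 - k) / (1 - q))| :=
            Finset.abs_sum_le_sum_abs _ _
          _ ≤ ∑ _k ∈ Finset.range (m + 1), C₁ * C₂ := by
            apply Finset.sum_le_sum
            intro k hk
            have hkm : m + 1 - k = m - k + 1 := by
              have := Finset.mem_range.mp hk; omega
            rw [abs_mul, hkm]
            exact mul_le_mul (hC₁ k) (hC₂ (m - k)) (abs_nonneg _) hC₁0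
          _ = (m + 1 : ℝ) * (C₁ * C₂) := by
            rw [Finset.sum_const, Finset.card_range]; ring
      calc c * r ^ m * |∑ k ∈ Finset.range (m + 1),
            f₁ (q ^ (k + 1) / (1 - q)) * f₂ (q ^ (m + 1 - k) / (1 - q))|
          ≤ c * r ^ m * ((m + 1 : ℝ) * (C₁ * C₂)) := by
            apply mul_le_mul_of_nonneg_left hb (by positivity)
        _ = c * C₁ * C₂ * ((m + 1 : ℝ) * r ^ m) := by ring
    have hgsum : Summable (fun m : ℕ => c * C₁ * C₂ * ((m + 1 : ℝ) * r ^ m)) := by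
      apply Summable.mul_left
      have h := summable_pow_mul_geometric_of_norm_lt_one 1 (r := r)
        (by rw [Real.norm_eq_abs, abs_of_pos hr0]; exact hr1)
      have h2 : Summable (fun m : ℕ => (m : ℝ) * r ^ m) := by simpa using h
      have h3 := h2.add (summable_geometric_of_lt_one hr0.le hr1)
      apply h3.congr
      intro m; ring
    exact Summable.of_nonneg_of_le (fun m => by positivity) hle hgsum
  · -- main identity
    set A : ℕ → ℝ := fun k => c * r ^ k * f₁ (q ^ (k + 1) / (1 - q)) with hA
    set B : ℕ → ℝ := fun k => c * r ^ k * f₂ (q ^ (k + 1) / (1 - q)) with hB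
    have hAn : Summable (fun k => ‖A k‖) := by
      apply hs₁.congr
      intro k
      rw [hkey k]
      show c * r ^ k * |f₁ (q ^ (k + 1) / (1 - q))|
        = ‖c * r ^ k * f₁ (q ^ (k + 1) / (1 - q))‖
      rw [Real.norm_eq_abs, abs_mul, abs_mul, abs_of_pos hc0, abs_of_pos (pow_pos hr0 k)]
    have hBn : Summable (fun k => ‖B k‖) := by
      apply hs₂.congr
      intro k
      rw [hkey k]
      show c * r ^ k * |f₂ (q ^ (k + 1) / (1 - q))|
        = ‖c * r ^ k * f₂ (q ^ (k + 1) / (1 - q))‖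
      rw [Real.norm_eq_abs, abs_mul, abs_mul, abs_of_pos hc0, abs_of_pos (pow_pos hr0 k)]
    have hmain := tsum_mul_tsum_eq_tsum_sum_range_of_summable_norm hAn hBn
    have hLA : (∑' k : ℕ, q ^ k * (q ^ k / (1 - q)) ^ (x - 1) * f₁ (q ^ (k + 1) / (1 - q)))
        = ∑' k, A k := by
      apply tsum_congr; intro k; rw [hkey k]
    have hLB : (∑' k : ℕ, q ^ k * (q ^ k / (1 - q)) ^ (x - 1) * f₂ (q ^ (k + 1) / (1 - q)))
        = ∑' k, B k := by
      apply tsum_congr; intro k; rw [hkey k]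
    rw [hLA, hLB, hmain]
    have hrw : ∀ m : ℕ, (∑ k ∈ range (m + 1), A k * B (m - k))
        = c * (q ^ m * (q ^ m / (1 - q)) ^ (x - 1) *
          ∑ k ∈ Finset.range (m + 1),
            f₁ (q ^ (k + 1) / (1 - q)) * f₂ (q ^ (m + 1 - k) / (1 - q))) := by
      intro m
      rw [hkey m, Finset.mul_sum, Finset.mul_sum]
      apply Finset.sum_congr rfl
      intro k hk
      have hkm : k ≤ m := Nat.lt_succ_iff.mp (Finset.mem_range.mp hk)
      have h1 : m + 1 - k = m - k + 1 := by omega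
      have h2 : r ^ k * r ^ (m - k) = r ^ m := by
        rw [← pow_add]; congr 1; omega
      simp only [hA, hB, h1]
      rw [← h2]; ring
    rw [tsum_congr hrw]
    rw [tsum_mul_left]
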